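/- Let ρ be a density matrix indexed by ((Fin 2) × (Fin 2)) (positive semidefinite with trace 1), representing a state of a 2 × 2 composite system. Define the matrix H by H_{(i,j),(k,l)} = ρ_{(i,j),(k,l)} if i ≠ k and j ≠ l, and H_{(i,j),(k,l)} = 0 otherwise. Then H is Hermitian, trace(H) = 0, and the operator norm of H is at most 1/2. -/

import Mathlib

open Matrix
open scoped ComplexOrder

lemma star_single' {n : Type*} [DecidableEq n] (p : n) :
    star (Pi.single p 1 : n → ℂ) = Pi.single p 1 := by
  funext r; simp [Pi.single_apply, apply_ite]

lemma diag_nonneg' {n : Type*} [Fintype n] [DecidableEq n] (ρ : Matrix n n ℂ)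
    (h : ρ.PosSemidef) (r : n) : 0 ≤ (ρ r r).re := by
  have := h.dotProduct_mulVec_nonneg (Pi.single r 1)
  rw [mulVec_single, star_single'] at this
  simp only [MulOpposite.op_one, one_smul] at this
  rw [single_dotProduct, one_mul] at this
  exact (Complex.le_def.mp this).1

lemma offdiag_bound {n : Type*} [Fintype n] [DecidableEq n] (ρ : Matrix n n ℂ)
    (h : ρ.PosSemidef) (p q : n) (_hpq : p ≠ q) :
    2 * ‖ρ p q‖ ≤ (ρ p p).re + (ρ q q).re := by
  rcases eq_or_ne (ρ p q) 0 with h0 | h0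
  · have h1 := diag_nonneg' ρ h p
    have h2 := diag_nonneg' ρ h q
    simp [h0]; linarith
  · set a := ρ p q with ha
    set c : ℂ := -(a / ‖a‖) with hc
    set v : n → ℂ := c • (Pi.single p 1 : n → ℂ) + (Pi.single q 1 : n → ℂ) with hv
    have key := h.dotProduct_mulVec_nonneg v
    have hexp : star v ⬝ᵥ ρ *ᵥ v
        = (starRingEnd ℂ) c * c * ρ p p + (starRingEnd ℂ) c * ρ p q
          + c * ρ q p + ρ q q := by
      simp only [hv, star_add, star_smul, star_single', mulVec_add, mulVec_smul, mulVec_single,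
        dotProduct_add, add_dotProduct, smul_dotProduct, dotProduct_smul,
        single_dotProduct, Pi.add_apply, Pi.smul_apply, smul_eq_mul, mul_one, one_mul,
        Pi.single_apply, RCLike.star_def, op_smul_eq_mul, Matrix.col_apply]
      ring
    have hna : (‖a‖:ℂ) ≠ 0 := by simpa using norm_ne_zero_iff.mpr h0
    have hconjmul : (starRingEnd ℂ) a * a = ((‖a‖:ℝ)^2 : ℂ) := by
      rw [Complex.conj_mul']
    have hc1 : (starRingEnd ℂ) c * c = 1 := by
      rw [hc]
      rw [map_neg, map_div₀, Complex.conj_ofReal, neg_mul_neg, div_mul_div_comm, hconjmul,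
        ← sq, div_self (pow_ne_zero 2 hna)]
    have hc2 : (starRingEnd ℂ) c * a = -‖a‖ := by
      rw [hc]
      rw [map_neg, map_div₀, Complex.conj_ofReal, neg_mul, div_mul_eq_mul_div, hconjmul,
        sq, mul_div_assoc, div_self hna, mul_one]
    have hqp : ρ q p = (starRingEnd ℂ) a := by
      rw [ha, ← h.1.apply p q]; simp [RCLike.star_def]
    have hconjmul2 : a * (starRingEnd ℂ) a = ((‖a‖:ℝ)^2 : ℂ) := by
      rw [mul_comm, hconjmul]
    have hc3 : c * ρ q p = -‖a‖ := by
      rw [hqp, hc, neg_mul, div_mul_eq_mul_div, hconjmul2, sq, mul_div_assoc,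
        div_self hna, mul_one]
    rw [hexp, hc1, hc2, hc3, one_mul] at key
    have := (Complex.le_def.mp key).1
    simp only [Complex.add_re, Complex.neg_re, Complex.ofReal_re, Complex.zero_re] at this
    linarith


/-- For a density matrix `ρ` of a `2 × 2` composite system, the
component `H` which keeps exactly the entries of `ρ` whose row and column
indices differ in both tensor factors is Hermitian, traceless, and has operator
norm at most `1/2`. -/
theorem offdiag_component_norm_le_half (ρ : Matrix (Fin 2 × Fin 2) (Fin 2 × Fin 2) ℂ)
    (hρ : ρ.PosSemidef) (hτ : ρ.trace = 1)
    (H : Matrix (Fin 2 × Fin 2) (Fin 2 × Fin 2) ℂ)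
    (hH : H = Matrix.of fun p q : Fin 2 × Fin 2 =>
      if p.1 ≠ q.1 ∧ p.2 ≠ q.2 then ρ p q else 0) :
    H.IsHermitian ∧ H.trace = 0 ∧ ‖Matrix.toEuclideanCLM (𝕜 := ℂ) H‖ ≤ 1 / 2 := by
  have hHerm : H.IsHermitian := by
    rw [hH]; ext p q
    simp only [conjTranspose_apply, of_apply]
    by_cases hc : p.1 ≠ q.1 ∧ p.2 ≠ q.2
    · rw [if_pos ⟨hc.1.symm, hc.2.symm⟩, if_pos hc]
      simpa [RCLike.star_def] using hρ.1.apply p q |>.symm ▸ rfl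
    · rw [if_neg (fun h => hc ⟨h.1.symm, h.2.symm⟩), if_neg hc, star_zero]
  refine ⟨hHerm, ?_, ?_⟩
  · rw [hH]; simp [Matrix.trace, Matrix.diag]
  -- the flip-both-bits permutation
  set σ : (Fin 2 × Fin 2) ≃ (Fin 2 × Fin 2) :=
    (Equiv.addRight (1 : Fin 2)).prodCongr (Equiv.addRight (1 : Fin 2)) with hσ
  have hiff : ∀ p q : Fin 2 × Fin 2, (p.1 ≠ q.1 ∧ p.2 ≠ q.2) ↔ q = σ p := by decide
  have hH' : ∀ p q, H p q = if q = σ p then ρ p q else 0 := by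
    intro p q
    rw [hH]
    simp only [of_apply]
    exact if_congr (hiff p q) rfl rfl
  -- trace information
  have hre := congrArg Complex.re hτ
  simp only [Matrix.trace, Matrix.diag, Fintype.sum_prod_type, Fin.sum_univ_two,
    Complex.add_re, Complex.one_re] at hre
  have d1 := diag_nonneg' ρ hρ (0,0)
  have d2 := diag_nonneg' ρ hρ (0,1)
  have d3 := diag_nonneg' ρ hρ (1,0)
  have d4 := diag_nonneg' ρ hρ (1,1)
  have hbd : ∀ p : Fin 2 × Fin 2, ‖H p (σ p)‖ ≤ 1 / 2 := by
    intro p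
    rw [hH', if_pos rfl]
    fin_cases p
    · have := offdiag_bound ρ hρ (0,0) ((1:Fin 2),(1:Fin 2)) (by decide)
      have hσv : σ ((0:Fin 2),(0:Fin 2)) = (1,1) := by decide
      show ‖ρ (0,0) (σ (0,0))‖ ≤ 1 / 2
      rw [hσv]; linarith
    · have := offdiag_bound ρ hρ (0,1) ((1:Fin 2),(0:Fin 2)) (by decide)
      have hσv : σ ((0:Fin 2),(1:Fin 2)) = (1,0) := by decide
      show ‖ρ (0,1) (σ (0,1))‖ ≤ 1 / 2
      rw [hσv]; linarith
    · have := offdiag_bound ρ hρ (1,0) ((0:Fin 2),(1:Fin 2)) (by decide)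
      have hσv : σ ((1:Fin 2),(0:Fin 2)) = (0,1) := by decide
      show ‖ρ (1,0) (σ (1,0))‖ ≤ 1 / 2
      rw [hσv]; linarith
    · have := offdiag_bound ρ hρ (1,1) ((0:Fin 2),(0:Fin 2)) (by decide)
      have hσv : σ ((1:Fin 2),(1:Fin 2)) = (0,0) := by decide
      show ‖ρ (1,1) (σ (1,1))‖ ≤ 1 / 2
      rw [hσv]; linarith
  have hmv : ∀ (y : (Fin 2 × Fin 2) → ℂ) p, (H *ᵥ y) p = H p (σ p) * y (σ p) := by
    intro y p
    rw [mulVec, dotProduct]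
    exact Finset.sum_eq_single (σ p)
      (fun b _ hb => by rw [hH' p b, if_neg hb, zero_mul])
      (fun hmem => absurd (Finset.mem_univ _) hmem)
  refine ContinuousLinearMap.opNorm_le_bound _ (by norm_num) (fun x => ?_)
  set y : (Fin 2 × Fin 2) → ℂ := (WithLp.equiv 2 _) x with hy
  have hx : x = (WithLp.equiv 2 _).symm y := (Equiv.symm_apply_apply _ _).symm
  have hcl : Matrix.toEuclideanCLM (𝕜 := ℂ) H ((WithLp.equiv 2 _).symm y)
      = (WithLp.equiv 2 _).symm (Matrix.toLin' H y) := rfl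
  rw [hx, hcl]
  rw [EuclideanSpace.norm_eq, EuclideanSpace.norm_eq]
  have hcoord : ∀ (v : (Fin 2 × Fin 2) → ℂ) p,
      ((WithLp.equiv 2 ((Fin 2 × Fin 2) → ℂ)).symm v) p = v p := fun _ _ => rfl
  simp only [hcoord]
  have hS : ∀ p, ‖(Matrix.toLin' H y) p‖ ^ 2 ≤ (1/2)^2 * ‖y (σ p)‖ ^ 2 := by
    intro p
    rw [Matrix.toLin'_apply, hmv, norm_mul, mul_pow]
    apply mul_le_mul_of_nonneg_right _ (by positivity)
    exact pow_le_pow_left₀ (norm_nonneg _) (hbd p) 2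
  have hsum : ∑ p, ‖(Matrix.toLin' H y) p‖ ^ 2 ≤ (1/2)^2 * ∑ p, ‖y p‖ ^ 2 := by
    calc ∑ p, ‖(Matrix.toLin' H y) p‖ ^ 2 ≤ ∑ p, (1/2)^2 * ‖y (σ p)‖ ^ 2 :=
          Finset.sum_le_sum (fun p _ => hS p)
      _ = (1/2)^2 * ∑ p, ‖y (σ p)‖ ^ 2 := by rw [Finset.mul_sum]
      _ = (1/2)^2 * ∑ p, ‖y p‖ ^ 2 := by
          rw [Equiv.sum_comp σ (fun p => ‖y p‖ ^ 2)]
  calc Real.sqrt (∑ p, ‖(Matrix.toLin' H y) p‖ ^ 2)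
      ≤ Real.sqrt ((1/2)^2 * ∑ p, ‖y p‖ ^ 2) := Real.sqrt_le_sqrt hsum
    _ = 1/2 * Real.sqrt (∑ p, ‖y p‖ ^ 2) := by
        rw [Real.sqrt_mul (by positivity), Real.sqrt_sq (by norm_num)]
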